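/- Let P be a path with colouring ω from colour-set C, and let P' with colouring ω' be obtained from P by deleting one internal or end vertex and joining its neighbours (each remaining vertex keeping its colour). Then for every colour d in C, the minimum number of flooding moves to make P' monochromatic in colour d is at most the minimum number to make P monochromatic in colour d. In particular m(P',ω') ≤ m(P,ω). -/

import Mathlib

namespace Flood

variable {V C : Type*}

/-- Two vertices are joined by an edge inside a monochromatic class. -/
def monoAdj (G : SimpleGraph V) (ω : V → C) (a b : V) : Prop :=
  G.Adj a b ∧ ω a = ω b

/-- `u` and `v` lie in a common monochromatic component of the colouring `ω`. -/
def monoLinked (G : SimpleGraph V) (ω : V → C) (u v : V) : Prop :=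
  Relation.ReflTransGen (monoAdj G ω) u v

/-- One flooding move: recolour the monochromatic component of `v` with colour `d`. -/
noncomputable def floodMove (G : SimpleGraph V) (ω : V → C) (v : V) (d : C) : V → C :=
  fun u => @ite _ (monoLinked G ω v u) (Classical.propDecidable _) d (ω u)

/-- Apply a sequence of flooding moves. -/
noncomputable def floodSeq (G : SimpleGraph V) (ω : V → C) (S : List (V × C)) : V → C :=
  S.foldl (fun ω' m => floodMove G ω' m.1 m.2) ω

/-- The sequence `S` floods `G`, i.e. makes it monochromatic. -/
def Floods (G : SimpleGraph V) (ω : V → C) (S : List (V × C)) : Prop :=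
  ∀ a b, floodSeq G ω S a = floodSeq G ω S b

/-- Minimum number of moves needed to make `G` monochromatic. -/
noncomputable def floodCost (G : SimpleGraph V) (ω : V → C) : ℕ :=
  sInf {k | ∃ S, S.length = k ∧ Floods G ω S}

/-- Minimum number of moves needed to make `G` monochromatic in colour `d`. -/
noncomputable def floodCostIn (G : SimpleGraph V) (ω : V → C) (d : C) : ℕ :=
  sInf {k | ∃ S, S.length = k ∧ ∀ a, floodSeq G ω S a = d}

/-- The sequence `S` links `u` and `v`. -/
def Links (G : SimpleGraph V) (ω : V → C) (S : List (V × C)) (u v : V) : Prop :=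
  monoLinked G (floodSeq G ω S) u v

/-- Minimum number of moves needed to link `u` and `v`. -/
noncomputable def linkCost (G : SimpleGraph V) (ω : V → C) (u v : V) : ℕ :=
  sInf {k | ∃ S, S.length = k ∧ Links G ω S u v}

/-- Minimum number of moves needed to link `u` and `v` in a monochromatic
component of colour `d`. -/
noncomputable def linkCostIn (G : SimpleGraph V) (ω : V → C) (u v : V) (d : C) : ℕ :=
  sInf {k | ∃ S, S.length = k ∧ Links G ω S u v ∧ floodSeq G ω S u = d}


end Flood

open Flood


section Aux

variable {V C : Type*}

lemma monoLinked_colour {G : SimpleGraph V} {ω : V → C} {a b : V}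
    (h : monoLinked G ω a b) : ω a = ω b := by
  induction h with
  | refl => rfl
  | tail _ h2 ih => exact ih.trans h2.2

lemma monoLinked_symm {G : SimpleGraph V} {ω : V → C} {a b : V}
    (h : monoLinked G ω a b) : monoLinked G ω b a := by
  have hs : Symmetric (monoAdj G ω) := fun x y h => ⟨h.1.symm, h.2.symm⟩
  exact (@Relation.ReflTransGen.stdSymm _ _ ⟨hs⟩).symm _ _ h

lemma floodMove_pos {G : SimpleGraph V} {ω : V → C} {v u : V} {d : C}
    (h : monoLinked G ω v u) : floodMove G ω v d u = d := by
  unfold floodMove; exact if_pos h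

lemma floodMove_neg {G : SimpleGraph V} {ω : V → C} {v u : V} {d : C}
    (h : ¬ monoLinked G ω v u) : floodMove G ω v d u = ω u := by
  unfold floodMove; exact if_neg h

lemma floodMove_self {G : SimpleGraph V} (ω : V → C) (v : V) :
    floodMove G ω v (ω v) = ω := by
  funext u
  unfold floodMove
  split_ifs with h
  · exact monoLinked_colour h
  · rfl

end Aux

section PathAux

variable {C : Type*}

open SimpleGraph

/-- `x` lies (inclusively) between `a` and `b`. -/
def Ival {m : ℕ} (a b x : Fin m) : Prop := (a ≤ x ∧ x ≤ b) ∨ (b ≤ x ∧ x ≤ a)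

lemma linked_ival {m : ℕ} {ω : Fin m → C} {a b : Fin m}
    (h : monoLinked (pathGraph m) ω a b) :
    ∀ x : Fin m, Ival a b x → ω x = ω a := by
  induction h with
  | refl =>
    intro x hx
    have : x = a := by
      rcases hx with ⟨h1, h2⟩ | ⟨h1, h2⟩
      · exact le_antisymm h2 h1
      · exact le_antisymm h2 h1
    rw [this]
  | tail h1 h2 ih =>
    rename_i p q
    have hca : ω p = ω a := by
      refine ih p ?_
      rcases le_total a p with h | h
      · exact Or.inl ⟨h, le_rfl⟩
      · exact Or.inr ⟨le_rfl, h⟩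
    have hadj := pathGraph_adj.mp h2.1
    intro x hx
    have hx' : Ival a p x ∨ x.val = q.val := by
      simp only [Ival, Fin.le_def] at hx ⊢
      omega
    rcases hx' with h | h
    · exact ih x h
    · have : x = q := Fin.ext h
      rw [this]
      exact h2.2.symm.trans hca

lemma ival_linked_aux {m : ℕ} (ω : Fin m → C) :
    ∀ (k : ℕ) (a b : Fin m), b.val = a.val + k →
      (∀ x : Fin m, a ≤ x → x ≤ b → ω x = ω a) → monoLinked (pathGraph m) ω a b := by
  intro k
  induction k with
  | zero =>
    intro a b hb _
    have : a = b := Fin.ext (by omega)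
    rw [this]
    exact Relation.ReflTransGen.refl
  | succ k ih =>
    intro a b hb h
    have hb' := b.isLt
    have ha' : a.val + 1 < m := by omega
    set a' : Fin m := ⟨a.val + 1, ha'⟩ with ha'def
    have hle : a ≤ a' := by simp [Fin.le_def, ha'def]
    have hcol : ω a' = ω a := h a' hle (by simp [Fin.le_def, ha'def]; omega)
    have hadj : (pathGraph m).Adj a a' := pathGraph_adj.mpr (Or.inl rfl)
    refine Relation.ReflTransGen.head ⟨hadj, hcol.symm⟩ ?_
    refine ih a' b (by simp [ha'def]; omega) ?_
    intro x h1 h2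
    exact (h x (le_trans hle h1) h2).trans hcol.symm

lemma ival_linked {m : ℕ} {ω : Fin m → C} {a b : Fin m}
    (h : ∀ x : Fin m, Ival a b x → ω x = ω a) : monoLinked (pathGraph m) ω a b := by
  rcases le_total a b with hab | hba
  · exact ival_linked_aux ω (b.val - a.val) a b (by have := Fin.le_def.mp hab; omega)
      (fun x h1 h2 => h x (Or.inl ⟨h1, h2⟩))
  · have hba2 : ω b = ω a := h b (Or.inr ⟨le_rfl, hba⟩)
    have : monoLinked (pathGraph m) ω b a := by
      refine ival_linked_aux ω (a.val - b.val) b a (by have := Fin.le_def.mp hba; omega) ?_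
      intro x h1 h2
      exact (h x (Or.inr ⟨h1, h2⟩)).trans hba2.symm
    exact monoLinked_symm this

end PathAux

section InvAux

open SimpleGraph

variable {C : Type*}

/-- The colouring `ω'` of a shorter path is a monotone re-embedding of `ω`. -/
def FloodInv {M N : ℕ} (ω : Fin M → C) (ω' : Fin N → C) : Prop :=
  ∃ h : Fin N → Fin M, Monotone h ∧ ∀ u, ω' u = ω (h u)

lemma floodInv_link {M N : ℕ} {ω : Fin M → C} {ω' : Fin N → C}
    {h : Fin N → Fin M} (hmono : Monotone h) (hcol : ∀ u, ω' u = ω (h u))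
    {u w : Fin N} (hl : monoLinked (pathGraph M) ω (h u) (h w)) :
    monoLinked (pathGraph N) ω' u w := by
  apply ival_linked
  intro x hx
  have hx' : Ival (h u) (h w) (h x) := by
    rcases hx with ⟨h1, h2⟩ | ⟨h1, h2⟩
    · exact Or.inl ⟨hmono h1, hmono h2⟩
    · exact Or.inr ⟨hmono h1, hmono h2⟩
  rw [hcol x, hcol u]
  exact linked_ival hl _ hx'

lemma floodInv_step {M N : ℕ} {ω : Fin M → C} {ω' : Fin N → C} (hN : N ≠ 0)
    (hinv : FloodInv ω ω') (v : Fin M) (c : C) :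
    ∃ p : Fin N × C,
      FloodInv (floodMove (pathGraph M) ω v c) (floodMove (pathGraph N) ω' p.1 p.2) := by
  classical
  obtain ⟨h, hmono, hcol⟩ := hinv
  by_cases hA : ∃ u₀ : Fin N, monoLinked (pathGraph M) ω v (h u₀)
  · obtain ⟨u₀, hu₀⟩ := hA
    refine ⟨(u₀, c),
      fun u => if monoLinked (pathGraph N) ω' u₀ u then h u₀ else h u, ?_, ?_⟩
    · -- monotone
      have blin : ∀ {x y : Fin N}, monoLinked (pathGraph N) ω' u₀ y → Ival u₀ y x →
          monoLinked (pathGraph N) ω' u₀ x := by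
        intro x y hy hx
        apply ival_linked
        intro z hz
        refine linked_ival hy z ?_
        simp only [Ival, Fin.le_def] at hx hz ⊢
        omega
      intro u w huw
      dsimp only
      by_cases hu : monoLinked (pathGraph N) ω' u₀ u <;>
        by_cases hw : monoLinked (pathGraph N) ω' u₀ w
      · rw [if_pos hu, if_pos hw]
      · rw [if_pos hu, if_neg hw]
        refine hmono ?_
        by_contra hlt
        push_neg at hlt
        exact hw (blin hu (Or.inr ⟨huw, hlt.le⟩))
      · rw [if_neg hu, if_pos hw]
        refine hmono ?_
        by_contra hlt
        push_neg at hlt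
        exact hu (blin hw (Or.inl ⟨hlt.le, huw⟩))
      · rw [if_neg hu, if_neg hw]
        exact hmono huw
    · -- colours
      intro u
      dsimp only
      by_cases hu : monoLinked (pathGraph N) ω' u₀ u
      · rw [if_pos hu, floodMove_pos hu, floodMove_pos hu₀]
      · rw [if_neg hu, floodMove_neg hu]
        have hvu : ¬ monoLinked (pathGraph M) ω v (h u) := by
          intro hc
          exact hu (floodInv_link hmono hcol ((monoLinked_symm hu₀).trans hc))
        rw [floodMove_neg hvu]
        exact hcol u
  · refine ⟨(⟨0, Nat.pos_of_ne_zero hN⟩, ω' ⟨0, Nat.pos_of_ne_zero hN⟩), h, hmono, ?_⟩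
    intro u
    rw [floodMove_self]
    have hvu : ¬ monoLinked (pathGraph M) ω v (h u) := fun hc => hA ⟨u, hc⟩
    rw [floodMove_neg hvu]
    exact hcol u

lemma floodInv_sim {M N : ℕ} (hN : N ≠ 0) :
    ∀ (S : List (Fin M × C)) (ω : Fin M → C) (ω' : Fin N → C), FloodInv ω ω' →
      ∃ S' : List (Fin N × C), S'.length = S.length ∧
        FloodInv (floodSeq (pathGraph M) ω S) (floodSeq (pathGraph N) ω' S') := by
  intro S
  induction S with
  | nil => intro ω ω' h; exact ⟨[], rfl, h⟩
  | cons p S ih =>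
    intro ω ω' h
    obtain ⟨q, hq⟩ := floodInv_step hN h p.1 p.2
    obtain ⟨S', hlen, hinv⟩ := ih _ _ hq
    exact ⟨q :: S', by simp [hlen], hinv⟩

lemma floodSeq_keep {V : Type*} {G : SimpleGraph V} {d : C} :
    ∀ (S : List (V × C)), (∀ p ∈ S, p.2 = d) → ∀ (ω : V → C) (a : V), ω a = d →
      floodSeq G ω S a = d := by
  intro S
  induction S with
  | nil => intro _ ω a h; exact h
  | cons p S ih =>
    intro hS ω a ha
    show floodSeq G (floodMove G ω p.1 p.2) S a = d
    refine ih (fun q hq => hS q (List.mem_cons_of_mem _ hq)) _ a ?_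
    unfold floodMove
    split_ifs with h
    · exact hS p (List.mem_cons_self)
    · exact ha

lemma exists_floodTo {m : ℕ} (G : SimpleGraph (Fin m)) (d : C) (ω : Fin m → C) :
    ∃ S : List (Fin m × C), ∀ a, floodSeq G ω S a = d := by
  have key : ∀ (l : List (Fin m)) (ω : Fin m → C) (a : Fin m), a ∈ l →
      floodSeq G ω (l.map (fun k => (k, d))) a = d := by
    intro l
    induction l with
    | nil => intro _ a h; simp at h
    | cons x l ih =>
      intro ω a ha
      show floodSeq G (floodMove G ω x d) (l.map _) a = d
      rcases List.mem_cons.mp ha with rfl | ha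
      · refine floodSeq_keep _ (by simp) _ a ?_
        exact floodMove_pos Relation.ReflTransGen.refl
      · exact ih _ a ha
  exact ⟨(List.finRange m).map (fun k => (k, d)), fun a => key _ ω a (List.mem_finRange a)⟩

end InvAux

/-- monotonicity for paths: deleting a vertex from a coloured
path and joining its neighbours cannot increase the number of moves needed to
flood the path in any given colour `d`, nor the number needed to flood it in
some colour. -/
theorem path_deletion_monotone {C : Type*} (n : ℕ)
    (ω : Fin (n + 1) → C) (i : Fin (n + 1)) :
    (∀ d : C,
      floodCostIn (SimpleGraph.pathGraph n) (ω ∘ i.succAbove) d ≤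
        floodCostIn (SimpleGraph.pathGraph (n + 1)) ω d) ∧
    floodCost (SimpleGraph.pathGraph n) (ω ∘ i.succAbove) ≤
      floodCost (SimpleGraph.pathGraph (n + 1)) ω := by
  classical
  have hinv0 : FloodInv ω (ω ∘ i.succAbove) :=
    ⟨i.succAbove, (Fin.strictMono_succAbove i).monotone, fun u => rfl⟩
  constructor
  · intro d
    unfold floodCostIn
    rcases Nat.eq_zero_or_pos n with hn | hn
    · subst hn
      have h0 : (0 : ℕ) ∈ {k | ∃ S : List (Fin 0 × C), S.length = k ∧
          ∀ a, floodSeq (SimpleGraph.pathGraph 0) (ω ∘ i.succAbove) S a = d} :=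
        ⟨[], rfl, fun a => a.elim0⟩
      exact le_trans (Nat.sInf_le h0) (Nat.zero_le _)
    · have hne : {k | ∃ S : List (Fin (n + 1) × C), S.length = k ∧
          ∀ a, floodSeq (SimpleGraph.pathGraph (n + 1)) ω S a = d}.Nonempty := by
        obtain ⟨S, hS⟩ := exists_floodTo (SimpleGraph.pathGraph (n + 1)) d ω
        exact ⟨S.length, S, rfl, hS⟩
      obtain ⟨S, hlen, hS⟩ := Nat.sInf_mem hne
      obtain ⟨S', hlen', h, hmono, hcol⟩ := floodInv_sim hn.ne' S ω _ hinv0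
      exact Nat.sInf_le ⟨S', hlen'.trans hlen, fun a => (hcol a).trans (hS _)⟩
  · unfold floodCost
    rcases Nat.eq_zero_or_pos n with hn | hn
    · subst hn
      have h0 : (0 : ℕ) ∈ {k | ∃ S : List (Fin 0 × C), S.length = k ∧
          Floods (SimpleGraph.pathGraph 0) (ω ∘ i.succAbove) S} :=
        ⟨[], rfl, fun a => a.elim0⟩
      exact le_trans (Nat.sInf_le h0) (Nat.zero_le _)
    · have hne : {k | ∃ S : List (Fin (n + 1) × C), S.length = k ∧
          Floods (SimpleGraph.pathGraph (n + 1)) ω S}.Nonempty := by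
        obtain ⟨S, hS⟩ := exists_floodTo (SimpleGraph.pathGraph (n + 1)) (ω 0) ω
        exact ⟨S.length, S, rfl, fun a b => (hS a).trans (hS b).symm⟩
      obtain ⟨S, hlen, hS⟩ := Nat.sInf_mem hne
      have hS' : ∀ a, floodSeq (SimpleGraph.pathGraph (n + 1)) ω S a =
          floodSeq (SimpleGraph.pathGraph (n + 1)) ω S ⟨0, n.succ_pos⟩ :=
        fun a => hS a _
      obtain ⟨S', hlen', h, hmono, hcol⟩ := floodInv_sim hn.ne' S ω _ hinv0
      refine Nat.sInf_le ⟨S', hlen'.trans hlen, fun a b => ?_⟩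
      rw [hcol a, hcol b, hS' (h a), hS' (h b)]
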